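/- For quaternionic polynomials f, g in one variable, the symmetrization is multiplicative: (f*g)^s = f^s * g^s. -/

import Mathlib

open Polynomial Finset

noncomputable def qconj (f : Polynomial (Quaternion ℝ)) : Polynomial (Quaternion ℝ) :=
  ∑ n ∈ f.support, Polynomial.monomial n (star (f.coeff n))

noncomputable def qsym (f : Polynomial (Quaternion ℝ)) : Polynomial (Quaternion ℝ) :=
  f * qconj f

lemma coeff_qconj (f : Polynomial (Quaternion ℝ)) (n : ℕ) :
    (qconj f).coeff n = star (f.coeff n) := by
  rw [qconj, finset_sum_coeff]
  simp only [coeff_monomial]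
  by_cases h : n ∈ f.support
  · rw [Finset.sum_eq_single n] <;> simp_all
  · rw [Finset.sum_eq_zero]
    · simp only [Polynomial.notMem_support_iff] at h; simp [h]
    · intro b hb
      have : b ≠ n := fun e => h (e ▸ hb)
      simp [this]

lemma qconj_mul (f g : Polynomial (Quaternion ℝ)) :
    qconj (f * g) = qconj g * qconj f := by
  apply Polynomial.ext; intro n
  rw [coeff_qconj, coeff_mul, coeff_mul, star_sum,
    ← Finset.Nat.sum_antidiagonal_swap (f := fun p => star (f.coeff p.1 * g.coeff p.2))]
  exact Finset.sum_congr rfl fun p _ => by simp [coeff_qconj, star_mul]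

lemma qconj_qconj (f : Polynomial (Quaternion ℝ)) : qconj (qconj f) = f := by
  apply Polynomial.ext; intro n; rw [coeff_qconj, coeff_qconj, star_star]

lemma qconj_qsym (f : Polynomial (Quaternion ℝ)) : qconj (qsym f) = qsym f := by
  rw [qsym, qconj_mul, qconj_qconj]

lemma selfadj_comm (a b : Quaternion ℝ) (h : star a = a) : a * b = b * a := by
  have h1 : a.imI = 0 := by
    have := congrArg QuaternionAlgebra.imI h; simp [QuaternionAlgebra.imI] at this ⊢; linarith
  have h2 : a.imJ = 0 := by
    have := congrArg QuaternionAlgebra.imJ h; simp at this ⊢; linarith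
  have h3 : a.imK = 0 := by
    have := congrArg QuaternionAlgebra.imK h; simp at this ⊢; linarith
  have : a = (a.re : Quaternion ℝ) := by
    ext <;> simp [h1, h2, h3]
  rw [this, Quaternion.coe_commutes]

lemma qsym_comm (f p : Polynomial (Quaternion ℝ)) : qsym f * p = p * qsym f := by
  apply Polynomial.ext; intro n
  rw [coeff_mul, coeff_mul, ← Finset.Nat.sum_antidiagonal_swap
    (f := fun q => p.coeff q.1 * (qsym f).coeff q.2)]
  refine Finset.sum_congr rfl fun q _ => ?_
  exact selfadj_comm _ _ (by rw [← coeff_qconj, qconj_qsym])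

theorem symmetrization_multiplicative (f g : Polynomial (Quaternion ℝ)) :
    qsym (f * g) = qsym f * qsym g := by
  calc qsym (f * g) = f * (g * qconj g * qconj f) := by
        rw [qsym, qconj_mul]; simp only [mul_assoc]
    _ = f * (qconj f * qsym g) := by rw [← qsym, qsym_comm]
    _ = qsym f * qsym g := by rw [← mul_assoc]; rfl
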